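/- Let F be a totally real field with narrow ray class group Cl_F^+(𝔤) for a nonzero integral ideal 𝔤. The action 𝔟 ↦ (ξ ↦ ξ^𝔟) of Cl_F^+(𝔤) on the set 𝒯_0[𝔤] of F_+^×-orbits of primitive 𝔤-torsion points is well-defined (principal ideals (β) with β totally positive and β ≡ 1 mod 𝔤 act trivially) and simply transitive. -/

import Mathlib

open scoped nonZeroDivisors
open NumberField FractionalIdeal

/-- `x ∈ F` is totally positive: every real embedding sends it to a positive real. -/
def IsTotPos (F : Type*) [Field F] (x : F) : Prop := ∀ τ : F →+* ℝ, 0 < τ x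

/-- `ξ : F → ℂ` is a `𝔤`-torsion point of `𝕋^𝔞 = Hom(𝔞, ℚ̄^×)`: an additive character
of `𝔞` trivial on `𝔤𝔞`. -/
def IsTorsChar {F : Type*} [Field F] [NumberField F] (𝔤 : Ideal (𝓞 F))
    (𝔞 : FractionalIdeal (𝓞 F)⁰ F) (ξ : F → ℂ) : Prop :=
  (∀ α ∈ 𝔞, ∀ β ∈ 𝔞, ξ (α + β) = ξ α * ξ β) ∧ ξ 0 = 1 ∧
    (∀ α ∈ 𝔞, ∀ γ ∈ (𝔤 : FractionalIdeal (𝓞 F)⁰ F) * 𝔞, ξ (α + γ) = ξ α)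

/-- A primitive `𝔤`-torsion point: one not factoring through `𝔞/𝔤'𝔞` for any `𝔤' ⊋ 𝔤`. -/
def IsPrimTorsChar {F : Type*} [Field F] [NumberField F] (𝔤 : Ideal (𝓞 F))
    (𝔞 : FractionalIdeal (𝓞 F)⁰ F) (ξ : F → ℂ) : Prop :=
  IsTorsChar 𝔤 𝔞 ξ ∧ ∀ 𝔤' : Ideal (𝓞 F), 𝔤 < 𝔤' →
    ∃ α ∈ 𝔞, ∃ γ ∈ (𝔤' : FractionalIdeal (𝓞 F)⁰ F) * 𝔞, ξ (α + γ) ≠ ξ α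

/-- The `F_+^×`-equivalence on pairs `(𝔞, ξ)` of a fractional ideal and a torsion point:
`(𝔞, ξ) ∼ (𝔞', ξ')` iff there is a totally positive `x` with `𝔞 = x𝔞'` and
`ξ'(α) = ξ(xα)` on `𝔞'`. -/
def TorsRel {F : Type*} [Field F] [NumberField F]
    (𝔞 : FractionalIdeal (𝓞 F)⁰ F) (ξ : F → ℂ)
    (𝔞' : FractionalIdeal (𝓞 F)⁰ F) (ξ' : F → ℂ) : Prop :=
  ∃ x : F, IsTotPos F x ∧ 𝔞 = spanSingleton (𝓞 F)⁰ x * 𝔞' ∧ ∀ α ∈ 𝔞', ξ' α = ξ (x * α)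

/-- `x ≡ 1 mod^× 𝔤`. -/
def MulCongOne {F : Type*} [Field F] [NumberField F] (𝔤 : Ideal (𝓞 F)) (x : F) : Prop :=
  ∃ a b : 𝓞 F, (b : F) ≠ 0 ∧ x = (a : F) / (b : F) ∧ a - 1 ∈ 𝔤 ∧ b - 1 ∈ 𝔤

namespace RayAux
set_option synthInstance.maxHeartbeats 1000000
set_option maxHeartbeats 1600000
variable {F : Type*} [Field F] [NumberField F]

lemma coe_algebraMap (r : 𝓞 F) : algebraMap (𝓞 F) F r = (r : F) := rfl

lemma exists_real_embedding (htr : ∀ v : NumberField.InfinitePlace F, v.IsReal) :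
    Nonempty (F →+* ℝ) := by
  obtain ⟨v⟩ : Nonempty (NumberField.InfinitePlace F) := inferInstance
  exact ⟨NumberField.InfinitePlace.embedding_of_isReal (htr v)⟩

lemma totPos_ne_zero (htr : ∀ v : NumberField.InfinitePlace F, v.IsReal) {x : F}
    (hx : IsTotPos F x) : x ≠ 0 := by
  obtain ⟨τ⟩ := exists_real_embedding htr
  intro h
  have := hx τ
  rw [h, _root_.map_zero] at this
  exact lt_irrefl 0 this

lemma totPos_mul {x y : F} (hx : IsTotPos F x) (hy : IsTotPos F y) : IsTotPos F (x * y) :=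
  fun τ => by rw [_root_.map_mul]; exact mul_pos (hx τ) (hy τ)

lemma totPos_div {x y : F} (hx : IsTotPos F x) (hy : IsTotPos F y) : IsTotPos F (x / y) :=
  fun τ => by rw [map_div₀]; exact div_pos (hx τ) (hy τ)

lemma smul_mem' (r : 𝓞 F) {α : F} {A : FractionalIdeal (𝓞 F)⁰ F} (hα : α ∈ A) :
    (r : F) * α ∈ A := by
  have := Submodule.smul_mem (A : Submodule (𝓞 F) F) r hα
  rwa [Algebra.smul_def, coe_algebraMap] at this

lemma mem_g_mul {𝔤 : Ideal (𝓞 F)} {A : FractionalIdeal (𝓞 F)⁰ F} {g : 𝓞 F} (hg : g ∈ 𝔤)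
    {α : F} (hα : α ∈ A) : (g : F) * α ∈ (𝔤 : FractionalIdeal (𝓞 F)⁰ F) * A := by
  have hgm : (g : F) ∈ (𝔤 : FractionalIdeal (𝓞 F)⁰ F) :=
    (FractionalIdeal.mem_coeIdeal _).mpr ⟨g, hg, rfl⟩
  exact FractionalIdeal.mul_mem_mul hgm hα

lemma gA_le {𝔤 : Ideal (𝓞 F)} {A : FractionalIdeal (𝓞 F)⁰ F} :
    (𝔤 : FractionalIdeal (𝓞 F)⁰ F) * A ≤ A := by
  calc (𝔤 : FractionalIdeal (𝓞 F)⁰ F) * A ≤ 1 * A :=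
        mul_le_mul_left coeIdeal_le_one A
  _ = A := one_mul A

-- sign-fixing lemma
lemma exists_sign_fix (𝔤 : Ideal (𝓞 F)) (h𝔤 : 𝔤 ≠ ⊥) (z : F) (hz : z ≠ 0) :
    ∃ s : 𝓞 F, s - 1 ∈ 𝔤 ∧ IsTotPos F (z * s) := by
  obtain ⟨a, b, hb, hab⟩ : ∃ a b : 𝓞 F, b ∈ (𝓞 F)⁰ ∧ z * (b : F) = (a : F) := by
    obtain ⟨⟨a, b⟩, h⟩ := IsLocalization.surj (𝓞 F)⁰ z
    exact ⟨a, b, b.2, h⟩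
  have hbF : (b : F) ≠ 0 := by
    simpa [coe_algebraMap] using
      (map_ne_zero_of_mem_nonZeroDivisors (algebraMap (𝓞 F) F)
        (IsFractionRing.injective (𝓞 F) F) hb)
  have haF : (a : F) ≠ 0 := by
    rw [← hab]
    exact mul_ne_zero hz hbF
  set m : ℕ := Ideal.absNorm 𝔤 with hm
  have hmmem : ((m : 𝓞 F)) ∈ 𝔤 := Ideal.absNorm_mem 𝔤
  have hm0 : (0:ℝ) < m := by
    have : m ≠ 0 := by simpa [hm, Ideal.absNorm_eq_zero_iff] using h𝔤
    positivity
  -- bound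
  obtain ⟨N, hN⟩ : ∃ N : ℕ, ∀ τ : F →+* ℝ, |τ z| / ((m : ℝ) * (τ a) ^ 2) < N := by
    obtain ⟨B, hB⟩ := (Set.finite_range
      (fun τ : F →+* ℝ => |τ z| / ((m : ℝ) * (τ (a:F)) ^ 2))).bddAbove
    obtain ⟨N, hNB⟩ := exists_nat_gt B
    exact ⟨N, fun τ => lt_of_le_of_lt (hB (Set.mem_range_self τ)) hNB⟩
  refine ⟨1 + (m : 𝓞 F) * ((N : 𝓞 F) * a * b), by simpa using 𝔤.mul_mem_right _ hmmem, ?_⟩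
  intro τ
  have hτa : τ (a : F) ≠ 0 := fun h => haF ((map_eq_zero_iff _ τ.injective).mp h)
  have hτab : τ (a : F) = τ z * τ (b : F) := by
    rw [← hab, _root_.map_mul]
  have hval : τ (z * ((1 + (m : 𝓞 F) * ((N : 𝓞 F) * a * b) : 𝓞 F) : F))
      = τ z + (N : ℝ) * (m : ℝ) * (τ (a:F)) ^ 2 := by
    push_cast
    rw [_root_.map_mul, _root_.map_add, _root_.map_one, _root_.map_mul, _root_.map_mul,
      _root_.map_mul, map_natCast, map_natCast]
    linear_combination (-((m:ℝ) * (N:ℝ) * τ (a:F))) * hτab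
  rw [hval]
  have h2 : (0:ℝ) < (m : ℝ) * (τ (a:F)) ^ 2 := by positivity
  have h3 : |τ z| < (N : ℝ) * ((m : ℝ) * (τ (a:F)) ^ 2) := by
    have := hN τ
    rwa [div_lt_iff₀ h2] at this
  have := abs_lt.mp h3
  nlinarith

-- in a Dedekind domain: t ∉ p, t*w ∈ pJ → w ∈ pJ
lemma mem_prime_mul_of_smul_mem {p : Ideal (𝓞 F)} (hp : p.IsPrime) (hptop : p ≠ ⊤)
    {J : FractionalIdeal (𝓞 F)⁰ F} (hJ : J ≠ 0) {t : 𝓞 F} (ht : t ∉ p) {w : F}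
    (hw : w ∈ J) (hmem : (t : F) * w ∈ (p : FractionalIdeal (𝓞 F)⁰ F) * J) :
    w ∈ (p : FractionalIdeal (𝓞 F)⁰ F) * J := by
  have hle1 : spanSingleton (𝓞 F)⁰ w * J⁻¹ ≤ 1 := by
    calc spanSingleton (𝓞 F)⁰ w * J⁻¹ ≤ J * J⁻¹ :=
          mul_le_mul_left (spanSingleton_le_iff_mem.mpr hw) J⁻¹
    _ = 1 := mul_inv_cancel₀ hJ
  obtain ⟨𝔠, h𝔠⟩ := le_one_iff_exists_coeIdeal.mp hle1
  have hkey : Ideal.span {t} * 𝔠 ≤ p := by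
    rw [← coeIdeal_le_coeIdeal F]
    rw [coeIdeal_mul, h𝔠, coeIdeal_span_singleton]
    have h1 : spanSingleton (𝓞 F)⁰ ((t : F) * w) ≤ (p : FractionalIdeal (𝓞 F)⁰ F) * J :=
      spanSingleton_le_iff_mem.mpr hmem
    have h2 : spanSingleton (𝓞 F)⁰ ((t : F) * w) * J⁻¹ ≤
        (p : FractionalIdeal (𝓞 F)⁰ F) * J * J⁻¹ := mul_le_mul_left h1 J⁻¹
    rw [mul_assoc, mul_inv_cancel₀ hJ, mul_one] at h2
    calc (spanSingleton (𝓞 F)⁰ ((t:F)) : FractionalIdeal (𝓞 F)⁰ F) *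
          (spanSingleton (𝓞 F)⁰ w * J⁻¹)
        = spanSingleton (𝓞 F)⁰ ((t : F) * w) * J⁻¹ := by
          rw [← mul_assoc, spanSingleton_mul_spanSingleton]
    _ ≤ (p : FractionalIdeal (𝓞 F)⁰ F) := h2
  have h𝔠p : 𝔠 ≤ p := by
    rcases (Ideal.IsPrime.mul_le hp).mp hkey with h | h
    · exact absurd (h (Ideal.mem_span_singleton_self t)) ht
    · exact h
  have : spanSingleton (𝓞 F)⁰ w ≤ (p : FractionalIdeal (𝓞 F)⁰ F) * J := by
    have : spanSingleton (𝓞 F)⁰ w = (𝔠 : FractionalIdeal (𝓞 F)⁰ F) * J := by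
      rw [h𝔠, mul_assoc, inv_mul_cancel₀ hJ, mul_one]
    rw [this]
    exact mul_le_mul_left ((coeIdeal_le_coeIdeal F).mpr h𝔠p) J
  exact this (mem_spanSingleton_self _ _)

/-- The moving lemma: any nonzero fractional ideal has a generator modulo `𝔤`. -/
lemma exists_gen (𝔤 : Ideal (𝓞 F)) (h𝔤 : 𝔤 ≠ ⊥) (J : FractionalIdeal (𝓞 F)⁰ F) (hJ : J ≠ 0) :
    ∃ z : F, z ≠ 0 ∧ z ∈ J ∧ ∃ 𝔠 : Ideal (𝓞 F), IsCoprime 𝔠 𝔤 ∧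
      spanSingleton (𝓞 F)⁰ z = J * (𝔠 : FractionalIdeal (𝓞 F)⁰ F) := by
  classical
  -- final packaging, given z ∈ J, z ≠ 0, z ∉ pJ for all maximal p ⊇ 𝔤
  have package : ∀ z : F, z ≠ 0 → z ∈ J →
      (∀ p : Ideal (𝓞 F), p.IsMaximal → 𝔤 ≤ p →
        z ∉ (p : FractionalIdeal (𝓞 F)⁰ F) * J) →
      ∃ 𝔠 : Ideal (𝓞 F), IsCoprime 𝔠 𝔤 ∧
        spanSingleton (𝓞 F)⁰ z = J * (𝔠 : FractionalIdeal (𝓞 F)⁰ F) := by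
    intro z hz0 hzJ hznot
    have hle1 : spanSingleton (𝓞 F)⁰ z * J⁻¹ ≤ 1 := by
      calc spanSingleton (𝓞 F)⁰ z * J⁻¹ ≤ J * J⁻¹ :=
            mul_le_mul_left (spanSingleton_le_iff_mem.mpr hzJ) J⁻¹
      _ = 1 := mul_inv_cancel₀ hJ
    obtain ⟨𝔠, h𝔠⟩ := le_one_iff_exists_coeIdeal.mp hle1
    have hspan : spanSingleton (𝓞 F)⁰ z = J * (𝔠 : FractionalIdeal (𝓞 F)⁰ F) := by
      rw [h𝔠, mul_comm J, mul_assoc, inv_mul_cancel₀ hJ, mul_one]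
    refine ⟨𝔠, ?_, hspan⟩
    rw [Ideal.isCoprime_iff_sup_eq]
    by_contra hsup
    obtain ⟨p, hpmax, hple⟩ := Ideal.exists_le_maximal _ hsup
    refine hznot p hpmax (le_trans le_sup_right hple) ?_
    have : spanSingleton (𝓞 F)⁰ z ≤ (p : FractionalIdeal (𝓞 F)⁰ F) * J := by
      rw [hspan, mul_comm]
      exact mul_le_mul_left
        ((coeIdeal_le_coeIdeal F).mpr (le_trans le_sup_left hple)) J
    exact this (mem_spanSingleton_self _ _)
  by_cases htop : 𝔤 = ⊤
  · -- no maximal ideals above ⊤; any nonzero z ∈ J works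
    obtain ⟨z, hzJ, hz0⟩ : ∃ z ∈ J, z ≠ 0 := by
      by_contra h
      push_neg at h
      exact hJ (le_antisymm (fun x hx => by
        simpa [FractionalIdeal.mem_zero_iff] using h x hx) (zero_le J))
    obtain ⟨𝔠, h1, h2⟩ := package z hz0 hzJ (fun p hp hle =>
      absurd (top_le_iff.mp (htop ▸ hle)) hp.ne_top)
    exact ⟨z, hz0, hzJ, 𝔠, h1, h2⟩
  · -- the finite set of primes over 𝔤
    set s : Finset (Ideal (𝓞 F)) :=
      (UniqueFactorizationMonoid.normalizedFactors 𝔤).toFinset with hs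
    have hsmem : ∀ p : Ideal (𝓞 F), p ∈ s ↔ p.IsPrime ∧ 𝔤 ≤ p := by
      intro p
      rw [hs, Multiset.mem_toFinset, Ideal.mem_normalizedFactors_iff h𝔤]
    have hsprime : ∀ p ∈ s, p.IsPrime := fun p hp => ((hsmem p).mp hp).1
    have hsmax : ∀ p ∈ s, p.IsMaximal := by
      intro p hp
      have h0 : p ≠ ⊥ := fun h => h𝔤 (le_bot_iff.mp (h ▸ ((hsmem p).mp hp).2))
      exact Ideal.IsPrime.isMaximal (hsprime p hp) h0
    -- choose z_p ∈ J \ pJ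
    have hlt : ∀ p ∈ s, (p : FractionalIdeal (𝓞 F)⁰ F) * J < J := by
      intro p hp
      have hle : (p : FractionalIdeal (𝓞 F)⁰ F) * J ≤ J := by
        calc (p : FractionalIdeal (𝓞 F)⁰ F) * J ≤ 1 * J :=
              mul_le_mul_left coeIdeal_le_one J
        _ = J := one_mul J
      refine lt_of_le_of_ne hle (fun heq => ?_)
      have : (p : FractionalIdeal (𝓞 F)⁰ F) * J = 1 * J := by rw [heq, one_mul]
      have hp1 : (p : FractionalIdeal (𝓞 F)⁰ F) = 1 := mul_right_cancel₀ hJ this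
      rw [← coeIdeal_top] at hp1
      exact (hsprime p hp).ne_top (coeIdeal_injective hp1)
    choose zf hzfJ hzfn using fun (p : s) =>
      SetLike.exists_of_lt (hlt p.1 p.2)
    -- choose t_p ∈ all other primes, not in p
    have htf : ∀ p : s, ∃ t : 𝓞 F, t ∉ p.1 ∧ ∀ q ∈ s.erase p.1, t ∈ q := by
      intro p
      have : ¬ (∏ q ∈ s.erase p.1, q) ≤ p.1 := by
        intro hle
        obtain ⟨q, hq, hqle⟩ := (Ideal.IsPrime.prod_le (hsprime p.1 p.2)).mp hle
        have hqs : q ∈ s := Finset.mem_of_mem_erase hq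
        have : q = p.1 := (hsmax q hqs).eq_of_le (hsprime p.1 p.2).ne_top hqle
        exact (Finset.mem_erase.mp hq).1 this
      obtain ⟨t, ht1, ht2⟩ := SetLike.not_le_iff_exists.mp this
      exact ⟨t, ht2, fun q hq => (Ideal.prod_le_inf.trans
        (Finset.inf_le hq)) ht1⟩
    choose tf htf1 htf2 using htf
    set z : F := ∑ p ∈ s.attach, (tf p : F) * zf p with hz
    have hzJ : z ∈ J := Submodule.sum_mem _ (fun p _ => smul_mem' (tf p) (hzfJ p))
    have hznot : ∀ p : Ideal (𝓞 F), p.IsMaximal → 𝔤 ≤ p →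
        z ∉ (p : FractionalIdeal (𝓞 F)⁰ F) * J := by
      intro p hpmax hple hzmem
      have hps : p ∈ s := (hsmem p).mpr ⟨hpmax.isPrime, hple⟩
      -- z = t_p z_p + rest, rest ∈ pJ
      have hrest : z - (tf ⟨p, hps⟩ : F) * zf ⟨p, hps⟩ ∈
          (p : FractionalIdeal (𝓞 F)⁰ F) * J := by
        rw [hz, ← Finset.sum_erase_add _ _ (Finset.mem_attach s ⟨p, hps⟩),
          add_sub_cancel_right]
        refine Submodule.sum_mem _ (fun q hq => ?_)
        have hqne : q.1 ≠ p := by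
          intro h
          have := (Finset.mem_erase.mp hq).1
          exact this (Subtype.ext h)
        have : (tf q) ∈ p := htf2 q p (Finset.mem_erase.mpr ⟨Ne.symm hqne, hps⟩)
        exact mem_g_mul this (hzfJ q)
      have : (tf ⟨p, hps⟩ : F) * zf ⟨p, hps⟩ ∈ (p : FractionalIdeal (𝓞 F)⁰ F) * J := by
        have := Submodule.sub_mem
          ((((p : FractionalIdeal (𝓞 F)⁰ F) * J : FractionalIdeal (𝓞 F)⁰ F)) :
            Submodule (𝓞 F) F) hzmem hrest
        rwa [sub_sub_cancel] at this
      exact hzfn ⟨p, hps⟩ (mem_prime_mul_of_smul_mem hpmax.isPrime hpmax.ne_top hJ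
        (htf1 ⟨p, hps⟩) (hzfJ ⟨p, hps⟩) this)
    have hz0 : z ≠ 0 := by
      obtain ⟨p, hpmax, hple⟩ := Ideal.exists_le_maximal 𝔤 htop
      intro h
      exact hznot p hpmax hple (h ▸ zero_mem _)
    obtain ⟨𝔠, h1, h2⟩ := package z hz0 hzJ hznot
    exact ⟨z, hz0, hzJ, 𝔠, h1, h2⟩

variable {𝔤 : Ideal (𝓞 F)} {𝔞 : FractionalIdeal (𝓞 F)⁰ F} {ξ : F → ℂ}

lemma tors_triv (h : IsTorsChar 𝔤 𝔞 ξ) {γ : F}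
    (hγ : γ ∈ (𝔤 : FractionalIdeal (𝓞 F)⁰ F) * 𝔞) : ξ γ = 1 := by
  have := h.2.2 0 (zero_mem _) γ hγ
  rwa [zero_add, h.2.1] at this

lemma tors_ne_zero (h : IsTorsChar 𝔤 𝔞 ξ) {α : F} (hα : α ∈ 𝔞) : ξ α ≠ 0 := by
  have hneg : -α ∈ 𝔞 := Submodule.neg_mem (𝔞 : Submodule (𝓞 F) F) hα
  have h1 := h.1 α hα (-α) hneg
  rw [add_neg_cancel, h.2.1] at h1
  intro h0
  rw [h0, zero_mul] at h1
  exact one_ne_zero h1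

/-- kernel-ideal lemma: if a primitive character is trivial on `𝔥𝔞` then `𝔥 ≤ 𝔤`. -/
lemma ker_le (hp : IsPrimTorsChar 𝔤 𝔞 ξ) (𝔥 : Ideal (𝓞 F))
    (h : ∀ γ ∈ (𝔥 : FractionalIdeal (𝓞 F)⁰ F) * 𝔞, ξ γ = 1) : 𝔥 ≤ 𝔤 := by
  by_contra hne
  have hlt : 𝔤 < 𝔤 ⊔ 𝔥 := left_lt_sup.mpr hne
  obtain ⟨α, hα, γ, hγ, hne'⟩ := hp.2 _ hlt
  apply hne'
  have heq : ((𝔤 ⊔ 𝔥 : Ideal (𝓞 F)) : FractionalIdeal (𝓞 F)⁰ F) * 𝔞 =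
      (𝔤 : FractionalIdeal (𝓞 F)⁰ F) * 𝔞 + (𝔥 : FractionalIdeal (𝓞 F)⁰ F) * 𝔞 := by
    rw [coeIdeal_sup, add_mul]
  rw [heq] at hγ
  have hγ' : γ ∈ (((𝔤 : FractionalIdeal (𝓞 F)⁰ F) * 𝔞 : FractionalIdeal (𝓞 F)⁰ F) :
      Submodule (𝓞 F) F) ⊔ (((𝔥 : FractionalIdeal (𝓞 F)⁰ F) * 𝔞 : FractionalIdeal (𝓞 F)⁰ F) :
      Submodule (𝓞 F) F) := by
    rw [← Submodule.add_eq_sup, ← coe_add]; exact hγ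
  obtain ⟨γ₁, hγ₁, γ₂, hγ₂, hsum⟩ := Submodule.mem_sup.mp hγ'
  have hγ₁𝔞 : γ₁ ∈ 𝔞 := gA_le hγ₁
  have hγ₂𝔞 : γ₂ ∈ 𝔞 := gA_le hγ₂
  have hstep : α + γ = (α + γ₁) + γ₂ := by rw [add_assoc, hsum]
  rw [hstep, hp.1.1 (α + γ₁) (Submodule.add_mem (𝔞 : Submodule (𝓞 F) F) hα hγ₁𝔞) γ₂ hγ₂𝔞, h γ₂ hγ₂,
    mul_one, hp.1.2.2 α hα γ₁ hγ₁]

/-- generator of `𝔞 / 𝔤𝔞`. -/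
lemma exists_theta (h𝔤 : 𝔤 ≠ ⊥) (h𝔞 : 𝔞 ≠ 0) :
    ∃ θ ∈ 𝔞, (∀ α ∈ 𝔞, ∃ r : 𝓞 F, α - (r : F) * θ ∈ (𝔤 : FractionalIdeal (𝓞 F)⁰ F) * 𝔞) ∧
      (∀ r : 𝓞 F, (r : F) * θ ∈ (𝔤 : FractionalIdeal (𝓞 F)⁰ F) * 𝔞 → r ∈ 𝔤) := by
  obtain ⟨θ, hθ0, hθmem, 𝔠, h𝔠cop, hspan⟩ := exists_gen 𝔤 h𝔤 𝔞 h𝔞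
  refine ⟨θ, hθmem, ?_, ?_⟩
  · intro α hα
    have hdecomp : 𝔞 = spanSingleton (𝓞 F)⁰ θ + (𝔤 : FractionalIdeal (𝓞 F)⁰ F) * 𝔞 := by
      calc 𝔞 = ((𝔠 ⊔ 𝔤 : Ideal (𝓞 F)) : FractionalIdeal (𝓞 F)⁰ F) * 𝔞 := by
            rw [h𝔠cop.sup_eq, coeIdeal_top, one_mul]
      _ = (𝔠 : FractionalIdeal (𝓞 F)⁰ F) * 𝔞 + (𝔤 : FractionalIdeal (𝓞 F)⁰ F) * 𝔞 := by
            rw [coeIdeal_sup, add_mul]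
      _ = spanSingleton (𝓞 F)⁰ θ + (𝔤 : FractionalIdeal (𝓞 F)⁰ F) * 𝔞 := by
            rw [mul_comm, ← hspan]
    have hα' : α ∈ spanSingleton (𝓞 F)⁰ θ + (𝔤 : FractionalIdeal (𝓞 F)⁰ F) * 𝔞 :=
      hdecomp ▸ hα
    have hα'' : α ∈ ((spanSingleton (𝓞 F)⁰ θ : FractionalIdeal (𝓞 F)⁰ F) :
        Submodule (𝓞 F) F) ⊔ (((𝔤 : FractionalIdeal (𝓞 F)⁰ F) * 𝔞 :
        FractionalIdeal (𝓞 F)⁰ F) : Submodule (𝓞 F) F) := by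
      rw [← Submodule.add_eq_sup, ← coe_add]; exact hα'
    obtain ⟨β, hβ, γ, hγ, hsum⟩ := Submodule.mem_sup.mp hα''
    obtain ⟨r, hr⟩ := (mem_spanSingleton _).mp hβ
    refine ⟨r, ?_⟩
    have hrθ : (r : F) * θ = β := by rw [← hr, Algebra.smul_def, coe_algebraMap]
    have : α - (r : F) * θ = γ := by rw [hrθ, ← hsum]; ring
    rw [this]; exact hγ
  · intro r hr
    have h1 : spanSingleton (𝓞 F)⁰ ((r : F) * θ) ≤ (𝔤 : FractionalIdeal (𝓞 F)⁰ F) * 𝔞 :=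
      spanSingleton_le_iff_mem.mpr hr
    have h2 : ((Ideal.span {r} * 𝔠 : Ideal (𝓞 F)) : FractionalIdeal (𝓞 F)⁰ F) ≤
        (𝔤 : FractionalIdeal (𝓞 F)⁰ F) := by
      rw [coeIdeal_mul, coeIdeal_span_singleton]
      have hmem2 : spanSingleton (𝓞 F)⁰ ((r : F)) * (𝔞 * (𝔠 : FractionalIdeal (𝓞 F)⁰ F)) ≤
          (𝔤 : FractionalIdeal (𝓞 F)⁰ F) * 𝔞 := by
        rw [← hspan, spanSingleton_mul_spanSingleton]
        exact h1
      have h3 := mul_le_mul_left hmem2 𝔞⁻¹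
      calc spanSingleton (𝓞 F)⁰ ((r : F)) * (𝔠 : FractionalIdeal (𝓞 F)⁰ F)
          = spanSingleton (𝓞 F)⁰ ((r : F)) * (𝔞 * (𝔠 : FractionalIdeal (𝓞 F)⁰ F)) * 𝔞⁻¹ := by
            rw [show spanSingleton (𝓞 F)⁰ ((r : F)) * (𝔞 * (𝔠 : FractionalIdeal (𝓞 F)⁰ F)) * 𝔞⁻¹
              = spanSingleton (𝓞 F)⁰ ((r : F)) * (𝔠 : FractionalIdeal (𝓞 F)⁰ F) * (𝔞 * 𝔞⁻¹) by
                ring, mul_inv_cancel₀ h𝔞, mul_one]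
      _ ≤ (𝔤 : FractionalIdeal (𝓞 F)⁰ F) * 𝔞 * 𝔞⁻¹ := h3
      _ = (𝔤 : FractionalIdeal (𝓞 F)⁰ F) := by rw [mul_assoc, mul_inv_cancel₀ h𝔞, mul_one]
    have h4 : Ideal.span {r} * 𝔠 ≤ 𝔤 := (coeIdeal_le_coeIdeal F).mp h2
    have h6 : 𝔤 ∣ Ideal.span {r} := h𝔠cop.symm.dvd_of_dvd_mul_right (Ideal.dvd_iff_le.mpr h4)
    exact Ideal.le_of_dvd h6 (Ideal.mem_span_singleton_self r)

section CharQ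

variable (𝔤 : Ideal (𝓞 F))

lemma charQ_congr {c : 𝓞 F → ℂˣ} (hadd : ∀ r s, c (r + s) = c r * c s)
    (hker : ∀ r ∈ 𝔤, c r = 1) {r r' : 𝓞 F} (h : r - r' ∈ 𝔤) : c r = c r' := by
  have : c r = c (r' + (r - r')) := by ring_nf
  rw [this, hadd, hker _ h, mul_one]

/-- Descend a `𝔤`-periodic additive unit character to a monoid hom on
`Multiplicative (𝓞 F ⧸ 𝔤)`. -/
noncomputable def charQ (c : 𝓞 F → ℂˣ) (hadd : ∀ r s, c (r + s) = c r * c s)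
    (hker : ∀ r ∈ 𝔤, c r = 1) : Multiplicative (𝓞 F ⧸ 𝔤) →* ℂˣ where
  toFun x := c (Ideal.Quotient.mk_surjective (I := 𝔤) x.toAdd).choose
  map_one' := by
    apply hker
    have hch := (Ideal.Quotient.mk_surjective (I := 𝔤) (Multiplicative.toAdd 1)).choose_spec
    have : Ideal.Quotient.mk 𝔤 (Ideal.Quotient.mk_surjective
        (I := 𝔤) (Multiplicative.toAdd 1)).choose = Ideal.Quotient.mk 𝔤 0 := by
      rw [hch]; simp
    simpa using Ideal.Quotient.eq.mp this
  map_mul' x y := by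
    have hx := (Ideal.Quotient.mk_surjective (I := 𝔤) x.toAdd).choose_spec
    have hy := (Ideal.Quotient.mk_surjective (I := 𝔤) y.toAdd).choose_spec
    have hxy := (Ideal.Quotient.mk_surjective (I := 𝔤) (x * y).toAdd).choose_spec
    rw [← hadd]
    apply charQ_congr 𝔤 hadd hker
    apply Ideal.Quotient.eq.mp
    rw [hxy, _root_.map_add, hx, hy]
    simp

lemma charQ_mk (c : 𝓞 F → ℂˣ) (hadd : ∀ r s, c (r + s) = c r * c s)
    (hker : ∀ r ∈ 𝔤, c r = 1) (r : 𝓞 F) :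
    charQ 𝔤 c hadd hker (Multiplicative.ofAdd (Ideal.Quotient.mk 𝔤 r)) = c r := by
  apply charQ_congr 𝔤 hadd hker
  apply Ideal.Quotient.eq.mp
  rw [(Ideal.Quotient.mk_surjective _).choose_spec]
  simp

lemma chi_surjective (h𝔤 : 𝔤 ≠ ⊥)
    (χ : (𝓞 F ⧸ 𝔤) → (Multiplicative (𝓞 F ⧸ 𝔤) →* ℂˣ))
    (hinj : Function.Injective χ) : Function.Surjective χ := by
  haveI : Fintype (𝓞 F ⧸ 𝔤) := @Fintype.ofFinite _ (Ring.HasFiniteQuotients.finiteQuotient h𝔤)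
  have hexp : Monoid.exponent (Multiplicative (𝓞 F ⧸ 𝔤)) ≠ 0 :=
    Monoid.exponent_ne_zero_of_finite
  haveI : NeZero ((Monoid.exponent (Multiplicative (𝓞 F ⧸ 𝔤)) : ℂ)) :=
    ⟨by exact_mod_cast hexp⟩
  obtain ⟨E⟩ := CommGroup.monoidHom_mulEquiv_of_hasEnoughRootsOfUnity
    (Multiplicative (𝓞 F ⧸ 𝔤)) ℂ
  exact (Finite.injective_iff_surjective_of_equiv
    ((E.toEquiv.trans Multiplicative.toAdd).symm)).mp hinj

end CharQ


lemma triv_on_sup {𝔞' : FractionalIdeal (𝓞 F)⁰ F} {η : F → ℂ} (hη : IsTorsChar 𝔤 𝔞' η)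
    {d : 𝓞 F} (hd : ∀ α ∈ 𝔞', η ((d : F) * α) = 1) :
    ∀ γ ∈ ((Ideal.span {d} ⊔ 𝔤 : Ideal (𝓞 F)) : FractionalIdeal (𝓞 F)⁰ F) * 𝔞', η γ = 1 := by
  intro γ hγ
  have heq : ((Ideal.span {d} ⊔ 𝔤 : Ideal (𝓞 F)) : FractionalIdeal (𝓞 F)⁰ F) * 𝔞' =
      ((Ideal.span {d} : Ideal (𝓞 F)) : FractionalIdeal (𝓞 F)⁰ F) * 𝔞' +
        (𝔤 : FractionalIdeal (𝓞 F)⁰ F) * 𝔞' := by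
    rw [coeIdeal_sup, add_mul]
  rw [heq] at hγ
  have hγ' : γ ∈ ((((Ideal.span {d} : Ideal (𝓞 F)) : FractionalIdeal (𝓞 F)⁰ F) * 𝔞' :
      FractionalIdeal (𝓞 F)⁰ F) : Submodule (𝓞 F) F) ⊔
      (((𝔤 : FractionalIdeal (𝓞 F)⁰ F) * 𝔞' : FractionalIdeal (𝓞 F)⁰ F) :
      Submodule (𝓞 F) F) := by
    rw [← Submodule.add_eq_sup, ← coe_add]; exact hγ
  obtain ⟨γ₁, hγ₁, γ₂, hγ₂, hsum⟩ := Submodule.mem_sup.mp hγ'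
  have hγ₁' : γ₁ ∈ ((Ideal.span {d} : Ideal (𝓞 F)) : FractionalIdeal (𝓞 F)⁰ F) * 𝔞' := hγ₁
  rw [coeIdeal_span_singleton] at hγ₁'
  obtain ⟨α, hα, hγ₁eq⟩ := mem_singleton_mul.mp hγ₁'
  have hγ₁mem : γ₁ ∈ 𝔞' := by rw [hγ₁eq]; exact smul_mem' d hα
  have h1 : η γ₁ = 1 := by rw [hγ₁eq]; exact hd α hα
  rw [← hsum, hη.2.2 γ₁ hγ₁mem γ₂ hγ₂, h1]

/-- The torsor property: two primitive characters on the same fractional ideal differ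
by multiplication by an element which is a unit mod `𝔤`. -/
lemma exists_multiplier (h𝔤 : 𝔤 ≠ ⊥) {𝔞' : FractionalIdeal (𝓞 F)⁰ F} (h𝔞' : 𝔞' ≠ 0)
    {η ξ' : F → ℂ} (hη : IsPrimTorsChar 𝔤 𝔞' η) (hξ' : IsPrimTorsChar 𝔤 𝔞' ξ') :
    ∃ w : 𝓞 F, w ≠ 0 ∧ (∃ v : 𝓞 F, w * v - 1 ∈ 𝔤) ∧ ∀ α ∈ 𝔞', ξ' α = η ((w : F) * α) := by
  classical
  obtain ⟨θ, hθmem, hθsurj, hθinj⟩ := exists_theta h𝔤 h𝔞'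
  have hrθ : ∀ r : 𝓞 F, (r : F) * θ ∈ 𝔞' := fun r => smul_mem' r hθmem
  -- cancellation helper
  have hcancel : ∀ a b : 𝓞 F, η ((a : F) * θ) = η ((b : F) * θ) →
      η (((a - b : 𝓞 F) : F) * θ) = 1 := by
    intro a b hab
    have hsum : ((a - b : 𝓞 F) : F) * θ + (b : F) * θ = (a : F) * θ := by push_cast; ring
    have hmul := hη.1.1 _ (hrθ (a - b)) _ (hrθ b)
    rw [hsum, hab] at hmul
    have := mul_right_cancel₀ (tors_ne_zero hη.1 (hrθ b))
      (show (1 : ℂ) * η ((b : F) * θ) = η (((a - b : 𝓞 F) : F) * θ) * η ((b : F) * θ) by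
        rw [one_mul, ← hmul])
    exact this.symm
  -- lifts
  set W : (𝓞 F ⧸ 𝔤) → 𝓞 F := fun u => (Ideal.Quotient.mk_surjective (I := 𝔤) u).choose with hWdef
  have hW : ∀ u, Ideal.Quotient.mk 𝔤 (W u) = u :=
    fun u => (Ideal.Quotient.mk_surjective (I := 𝔤) u).choose_spec
  -- characters
  have hval : ∀ t : 𝓞 F, η ((t : F) * θ) ≠ 0 := fun t => tors_ne_zero hη.1 (hrθ t)
  set c : 𝓞 F → 𝓞 F → ℂˣ := fun t r => Units.mk0 (η (((t * r : 𝓞 F) : F) * θ)) (hval (t * r))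
    with hcdef
  have hcadd : ∀ t r s : 𝓞 F, c t (r + s) = c t r * c t s := by
    intro t r s
    ext
    have hsplit : ((t * (r + s) : 𝓞 F) : F) * θ =
        ((t * r : 𝓞 F) : F) * θ + ((t * s : 𝓞 F) : F) * θ := by push_cast; ring
    simp only [hcdef, Units.val_mk0, Units.val_mul]
    rw [hsplit]
    exact hη.1.1 _ (hrθ (t * r)) _ (hrθ (t * s))
  have hcker : ∀ t : 𝓞 F, ∀ r ∈ 𝔤, c t r = 1 := by
    intro t r hr
    ext
    simp only [hcdef, Units.val_mk0, Units.val_one]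
    exact tors_triv hη.1 (mem_g_mul (Ideal.mul_mem_left 𝔤 t hr) hθmem)
  set χ : (𝓞 F ⧸ 𝔤) → (Multiplicative (𝓞 F ⧸ 𝔤) →* ℂˣ) :=
    fun u => charQ 𝔤 (c (W u)) (hcadd (W u)) (hcker (W u)) with hχdef
  -- injectivity of χ
  have hχinj : Function.Injective χ := by
    intro u u' huu'
    have hpt : ∀ r : 𝓞 F, η (((W u * r : 𝓞 F) : F) * θ) = η (((W u' * r : 𝓞 F) : F) * θ) := by
      intro r
      have := DFunLike.congr_fun huu' (Multiplicative.ofAdd (Ideal.Quotient.mk 𝔤 r))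
      rw [hχdef] at this
      simp only at this
      rw [charQ_mk, charQ_mk] at this
      have := congrArg Units.val this
      simpa [hcdef] using this
    -- η trivial on (W u - W u')·𝔞'
    have hd : ∀ α ∈ 𝔞', η (((W u - W u' : 𝓞 F) : F) * α) = 1 := by
      intro α hα
      obtain ⟨r, hr⟩ := hθsurj α hα
      set d : 𝓞 F := W u - W u' with hddef
      have hsplit : (d : F) * α = ((d * r : 𝓞 F) : F) * θ + (d : F) * (α - (r : F) * θ) := by
        push_cast; ring
      have hmem2 : (d : F) * (α - (r : F) * θ) ∈ (𝔤 : FractionalIdeal (𝓞 F)⁰ F) * 𝔞' := by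
        have := Submodule.smul_mem (((𝔤 : FractionalIdeal (𝓞 F)⁰ F) * 𝔞' :
          FractionalIdeal (𝓞 F)⁰ F) : Submodule (𝓞 F) F) d hr
        rwa [Algebra.smul_def, coe_algebraMap] at this
      rw [hsplit, hη.1.2.2 _ (hrθ (d * r)) _ hmem2]
      have hdr : d * r = W u * r - W u' * r := by rw [hddef]; ring
      rw [hdr]
      exact hcancel (W u * r) (W u' * r) (hpt r)
    have hle := ker_le hη (Ideal.span {W u - W u'} ⊔ 𝔤) (triv_on_sup hη.1 hd)
    have hmem3 : W u - W u' ∈ 𝔤 :=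
      hle (le_sup_left (a := Ideal.span {W u - W u'}) (b := 𝔤)
        (Ideal.mem_span_singleton_self _))
    rw [← hW u, ← hW u']
    exact Ideal.Quotient.eq.mpr hmem3
  -- surjectivity, and hit the character of ξ'
  have hval' : ∀ r : 𝓞 F, ξ' ((r : F) * θ) ≠ 0 := fun r => tors_ne_zero hξ'.1 (hrθ r)
  set c' : 𝓞 F → ℂˣ := fun r => Units.mk0 (ξ' ((r : F) * θ)) (hval' r) with hc'def
  have hc'add : ∀ r s : 𝓞 F, c' (r + s) = c' r * c' s := by
    intro r s
    ext
    have hsplit : ((r + s : 𝓞 F) : F) * θ = (r : F) * θ + (s : F) * θ := by push_cast; ring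
    simp only [hc'def, Units.val_mk0, Units.val_mul]
    rw [hsplit]
    exact hξ'.1.1 _ (hrθ r) _ (hrθ s)
  have hc'ker : ∀ r ∈ 𝔤, c' r = 1 := by
    intro r hr
    ext
    simp only [hc'def, Units.val_mk0, Units.val_one]
    exact tors_triv hξ'.1 (mem_g_mul hr hθmem)
  obtain ⟨u, hu⟩ := chi_surjective 𝔤 h𝔤 χ hχinj (charQ 𝔤 c' hc'add hc'ker)
  -- pointwise identity for w₀ := W u
  have hpoint : ∀ α ∈ 𝔞', ξ' α = η ((W u : F) * α) := by
    intro α hα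
    obtain ⟨r, hr⟩ := hθsurj α hα
    have hα1 : α = (r : F) * θ + (α - (r : F) * θ) := by ring
    have h1 : ξ' α = ξ' ((r : F) * θ) := by
      conv_lhs => rw [hα1]
      exact hξ'.1.2.2 _ (hrθ r) _ hr
    have h2 : η ((W u : F) * α) = η (((W u * r : 𝓞 F) : F) * θ) := by
      have hsplit : (W u : F) * α = ((W u * r : 𝓞 F) : F) * θ +
          (W u : F) * (α - (r : F) * θ) := by push_cast; ring
      have hmem2 : (W u : F) * (α - (r : F) * θ) ∈
          (𝔤 : FractionalIdeal (𝓞 F)⁰ F) * 𝔞' := by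
        have := Submodule.smul_mem (((𝔤 : FractionalIdeal (𝓞 F)⁰ F) * 𝔞' :
          FractionalIdeal (𝓞 F)⁰ F) : Submodule (𝓞 F) F) (W u) hr
        rwa [Algebra.smul_def, coe_algebraMap] at this
      rw [hsplit]
      exact hη.1.2.2 _ (hrθ (W u * r)) _ hmem2
    have h3 : ξ' ((r : F) * θ) = η (((W u * r : 𝓞 F) : F) * θ) := by
      have := DFunLike.congr_fun hu (Multiplicative.ofAdd (Ideal.Quotient.mk 𝔤 r))
      rw [hχdef] at this
      rw [charQ_mk, charQ_mk] at this
      have := congrArg Units.val this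
      simp only [hcdef, hc'def, Units.val_mk0] at this
      exact this.symm
    rw [h1, h3, h2]
  -- u is a unit
  have hunit : ∃ v : 𝓞 F ⧸ 𝔤, u * v = 1 := by
    by_contra hnv
    push_neg at hnv
    haveI : Fintype (𝓞 F ⧸ 𝔤) := @Fintype.ofFinite _ (Ring.HasFiniteQuotients.finiteQuotient h𝔤)
    have hnotinj : ¬ Function.Injective (fun t : 𝓞 F ⧸ 𝔤 => u * t) := by
      intro hinj
      obtain ⟨v, hv⟩ := Finite.injective_iff_surjective.mp hinj 1
      exact hnv v hv
    obtain ⟨t, t', htt', hne⟩ := Function.not_injective_iff.mp hnotinj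
    set T : 𝓞 F := W t - W t' with hTdef
    have hT𝔤 : T ∉ 𝔤 := by
      intro hT
      apply hne
      rw [← hW t, ← hW t']
      exact Ideal.Quotient.eq.mpr hT
    have hmulT : W u * T ∈ 𝔤 := by
      rw [← Ideal.Quotient.eq_zero_iff_mem, _root_.map_mul, hW u, hTdef, map_sub, hW t, hW t',
        mul_sub, htt', sub_self]
    have hd : ∀ α ∈ 𝔞', ξ' ((T : F) * α) = 1 := by
      intro α hα
      have hTα : (T : F) * α ∈ 𝔞' := smul_mem' T hα
      rw [hpoint _ hTα]
      have heq2 : (W u : F) * ((T : F) * α) = ((W u * T : 𝓞 F) : F) * α := by push_cast; ring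
      rw [heq2]
      exact tors_triv hη.1 (mem_g_mul hmulT hα)
    have hle := ker_le hξ' (Ideal.span {T} ⊔ 𝔤) (triv_on_sup hξ'.1 hd)
    exact hT𝔤 (hle (le_sup_left (a := Ideal.span {T}) (b := 𝔤)
      (Ideal.mem_span_singleton_self _)))
  obtain ⟨v, huv⟩ := hunit
  by_cases hw0 : W u = 0
  · -- degenerate case : 1 ∈ 𝔤
    have hu0 : u = 0 := by rw [← hW u, hw0, _root_.map_zero]
    have h10 : (1 : 𝓞 F ⧸ 𝔤) = 0 := by rw [← huv, hu0, zero_mul]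
    have h1𝔤 : (1 : 𝓞 F) ∈ 𝔤 := by
      rw [← Ideal.Quotient.eq_zero_iff_mem, _root_.map_one]; exact h10
    have h𝔤top : 𝔤 = ⊤ := (Ideal.eq_top_iff_one 𝔤).mpr h1𝔤
    refine ⟨1, one_ne_zero, ⟨1, by simpa using h1𝔤⟩, ?_⟩
    intro α hα
    have hmem : α ∈ (𝔤 : FractionalIdeal (𝓞 F)⁰ F) * 𝔞' := by
      rw [h𝔤top, coeIdeal_top, one_mul]; exact hα
    have hmem2 : ((1 : 𝓞 F) : F) * α ∈ (𝔤 : FractionalIdeal (𝓞 F)⁰ F) * 𝔞' := by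
      rw [show ((1 : 𝓞 F) : F) * α = α by simp]; exact hmem
    rw [tors_triv hξ'.1 hmem, tors_triv hη.1 hmem2]
  · refine ⟨W u, hw0, ⟨W v, ?_⟩, hpoint⟩
    have : Ideal.Quotient.mk 𝔤 (W u * W v) = Ideal.Quotient.mk 𝔤 1 := by
      rw [_root_.map_mul, hW u, hW v, _root_.map_one, huv]
    exact Ideal.Quotient.eq.mp this

lemma mem_add_decomp {A B : FractionalIdeal (𝓞 F)⁰ F} {γ : F} (h : γ ∈ A + B) :
    ∃ γ₁ ∈ A, ∃ γ₂ ∈ B, γ₁ + γ₂ = γ := by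
  have h' : γ ∈ ((A : Submodule (𝓞 F) F)) ⊔ ((B : Submodule (𝓞 F) F)) := by
    rw [← Submodule.add_eq_sup, ← coe_add]; exact h
  obtain ⟨γ₁, h₁, γ₂, h₂, hs⟩ := Submodule.mem_sup.mp h'
  exact ⟨γ₁, h₁, γ₂, h₂, hs⟩

lemma mul_coeIdeal_le (A : FractionalIdeal (𝓞 F)⁰ F) (𝔟 : Ideal (𝓞 F)) :
    A * (𝔟 : FractionalIdeal (𝓞 F)⁰ F) ≤ A := by
  calc A * (𝔟 : FractionalIdeal (𝓞 F)⁰ F) ≤ A * 1 :=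
        mul_le_mul_right coeIdeal_le_one A
  _ = A := mul_one A

lemma coe_mem_coeIdeal {I : Ideal (𝓞 F)} {t : 𝓞 F}
    (h : (t : F) ∈ (I : FractionalIdeal (𝓞 F)⁰ F)) : t ∈ I := by
  obtain ⟨c, hc, hceq⟩ := (mem_coeIdeal _).mp h
  have : c = t := IsFractionRing.injective (𝓞 F) F hceq
  rwa [← this]

lemma cong_coprime {𝔤 : Ideal (𝓞 F)} {t : 𝓞 F} (h : ∃ v : 𝓞 F, t * v - 1 ∈ 𝔤) :
    IsCoprime (Ideal.span {t}) 𝔤 := by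
  obtain ⟨v, hv⟩ := h
  rw [Ideal.isCoprime_iff_sup_eq, Ideal.eq_top_iff_one]
  have h1 : (1 : 𝓞 F) = t * v - (t * v - 1) := by ring
  rw [h1]
  exact Submodule.sub_mem _
    (Submodule.mem_sup_left (Ideal.mul_mem_right v _ (Ideal.mem_span_singleton_self t)))
    (Submodule.mem_sup_right hv)

lemma span_coprime {𝔤 : Ideal (𝓞 F)} {s : 𝓞 F} (h : s - 1 ∈ 𝔤) :
    IsCoprime (Ideal.span {s}) 𝔤 :=
  cong_coprime ⟨1, by simpa using h⟩

lemma pullback_mems {𝔤 : Ideal (𝓞 F)} {𝔞 𝔞' : FractionalIdeal (𝓞 F)⁰ F} {x₀ : F}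
    {𝔟₀ : Ideal (𝓞 F)} (hax : 𝔞 * (𝔟₀ : FractionalIdeal (𝓞 F)⁰ F) =
      spanSingleton (𝓞 F)⁰ x₀ * 𝔞') :
    (∀ α ∈ 𝔞', x₀ * α ∈ 𝔞) ∧
      (∀ γ ∈ (𝔤 : FractionalIdeal (𝓞 F)⁰ F) * 𝔞', x₀ * γ ∈
        (𝔤 : FractionalIdeal (𝓞 F)⁰ F) * 𝔞) := by
  constructor
  · intro α hα
    have h1 : x₀ * α ∈ spanSingleton (𝓞 F)⁰ x₀ * 𝔞' :=
      FractionalIdeal.mul_mem_mul (mem_spanSingleton_self _ _) hα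
    rw [← hax] at h1
    exact mul_coeIdeal_le 𝔞 𝔟₀ h1
  · intro γ hγ
    have h1 : x₀ * γ ∈ spanSingleton (𝓞 F)⁰ x₀ * ((𝔤 : FractionalIdeal (𝓞 F)⁰ F) * 𝔞') :=
      FractionalIdeal.mul_mem_mul (mem_spanSingleton_self _ _) hγ
    have hE : spanSingleton (𝓞 F)⁰ x₀ * ((𝔤 : FractionalIdeal (𝓞 F)⁰ F) * 𝔞') =
        (𝔤 : FractionalIdeal (𝓞 F)⁰ F) * 𝔞 * (𝔟₀ : FractionalIdeal (𝓞 F)⁰ F) := by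
      rw [show spanSingleton (𝓞 F)⁰ x₀ * ((𝔤 : FractionalIdeal (𝓞 F)⁰ F) * 𝔞') =
        (𝔤 : FractionalIdeal (𝓞 F)⁰ F) * (spanSingleton (𝓞 F)⁰ x₀ * 𝔞') from by ring, ← hax]
      ring
    rw [hE] at h1
    exact mul_coeIdeal_le _ 𝔟₀ h1

/-- pull back a primitive character along multiplication by `x₀`, where
`(x₀) = 𝔞𝔟₀/𝔞'` with `𝔟₀` coprime to `𝔤`. -/
lemma pullback_prim {𝔤 : Ideal (𝓞 F)} {𝔞 𝔞' : FractionalIdeal (𝓞 F)⁰ F} {ξ : F → ℂ}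
    (hξ : IsPrimTorsChar 𝔤 𝔞 ξ) {x₀ : F} {𝔟₀ : Ideal (𝓞 F)} (hcop : IsCoprime 𝔟₀ 𝔤)
    (hax : 𝔞 * (𝔟₀ : FractionalIdeal (𝓞 F)⁰ F) = spanSingleton (𝓞 F)⁰ x₀ * 𝔞') :
    IsPrimTorsChar 𝔤 𝔞' (fun α => ξ (x₀ * α)) := by
  obtain ⟨hmem1, hmem2⟩ := pullback_mems (𝔤 := 𝔤) hax
  refine ⟨⟨?_, ?_, ?_⟩, ?_⟩
  · intro α hα β hβ
    simp only
    rw [mul_add]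
    exact hξ.1.1 _ (hmem1 α hα) _ (hmem1 β hβ)
  · simp only [mul_zero]
    exact hξ.1.2.1
  · intro α hα γ hγ
    simp only
    rw [mul_add]
    exact hξ.1.2.2 _ (hmem1 α hα) _ (hmem2 γ hγ)
  · intro 𝔤' hlt
    by_contra hcon
    push_neg at hcon
    -- the pulled-back character is invariant under 𝔤'-shifts; deduce ξ trivial on 𝔤'𝔞
    have step1 : ∀ γ ∈ (𝔤' : FractionalIdeal (𝓞 F)⁰ F) * 𝔞', ξ (x₀ * γ) = 1 := by
      intro γ hγ
      have := hcon 0 (zero_mem _) γ hγ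
      simpa [hξ.1.2.1] using this
    have step2 : ∀ δ ∈ (𝔤' : FractionalIdeal (𝓞 F)⁰ F) * 𝔞, ξ δ = 1 := by
      intro δ hδ
      -- decompose using 𝔟₀ ⊔ 𝔤 = ⊤
      have hdec : (𝔤' : FractionalIdeal (𝓞 F)⁰ F) * 𝔞 =
          (𝔤' : FractionalIdeal (𝓞 F)⁰ F) * 𝔞 * (𝔟₀ : FractionalIdeal (𝓞 F)⁰ F) +
          (𝔤' : FractionalIdeal (𝓞 F)⁰ F) * 𝔞 * (𝔤 : FractionalIdeal (𝓞 F)⁰ F) := by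
        rw [← mul_add, ← coeIdeal_sup, hcop.sup_eq, coeIdeal_top, mul_one]
      rw [hdec] at hδ
      obtain ⟨δ₁, hδ₁, δ₂, hδ₂, hsum⟩ := mem_add_decomp hδ
      have hE : (𝔤' : FractionalIdeal (𝓞 F)⁰ F) * 𝔞 * (𝔟₀ : FractionalIdeal (𝓞 F)⁰ F) =
          spanSingleton (𝓞 F)⁰ x₀ * ((𝔤' : FractionalIdeal (𝓞 F)⁰ F) * 𝔞') := by
        rw [show (𝔤' : FractionalIdeal (𝓞 F)⁰ F) * 𝔞 * (𝔟₀ : FractionalIdeal (𝓞 F)⁰ F) =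
          (𝔤' : FractionalIdeal (𝓞 F)⁰ F) * (𝔞 * (𝔟₀ : FractionalIdeal (𝓞 F)⁰ F)) from by
          ring, hax]
        ring
      rw [hE] at hδ₁
      obtain ⟨γ, hγ, hδ₁eq⟩ := mem_singleton_mul.mp hδ₁
      have h1 : ξ δ₁ = 1 := by rw [hδ₁eq]; exact step1 γ hγ
      have hδ₂' : δ₂ ∈ (𝔤 : FractionalIdeal (𝓞 F)⁰ F) * 𝔞 := by
        have hle : (𝔤' : FractionalIdeal (𝓞 F)⁰ F) * 𝔞 * (𝔤 : FractionalIdeal (𝓞 F)⁰ F) ≤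
            (𝔤 : FractionalIdeal (𝓞 F)⁰ F) * 𝔞 := by
          rw [show (𝔤' : FractionalIdeal (𝓞 F)⁰ F) * 𝔞 * (𝔤 : FractionalIdeal (𝓞 F)⁰ F) =
            (𝔤 : FractionalIdeal (𝓞 F)⁰ F) * ((𝔤' : FractionalIdeal (𝓞 F)⁰ F) * 𝔞) from by ring]
          exact mul_le_mul_right gA_le _
        exact hle hδ₂
      have h2 : ξ δ₂ = 1 := tors_triv hξ.1 hδ₂'
      have hδ₁𝔞 : δ₁ ∈ 𝔞 := by
        rw [hδ₁eq]
        exact hmem1 γ (gA_le hγ)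
      have hδ₂𝔞 : δ₂ ∈ 𝔞 := gA_le hδ₂'
      rw [← hsum, hξ.1.1 _ hδ₁𝔞 _ hδ₂𝔞, h1, h2, one_mul]
    have := ker_le hξ 𝔤' step2
    exact (not_le_of_gt hlt) this

end RayAux

open RayAux

/-- **The narrow ray class group acts simply transitively on `𝒯_0[𝔤]`.**
For a totally real field `F` and a nonzero integral ideal `𝔤`, the action
`𝔟 ↦ (ξ ↦ ξ^𝔟)` (restriction of `ξ` along `𝔞𝔟 ⊆ 𝔞`) on the set of `F_+^×`-orbits of
primitive `𝔤`-torsion points is well defined — principal ideals `(β)` with `β` totally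
positive and `β ≡ 1 mod 𝔤` act trivially — and simply transitive. -/
theorem ray_class_action_on_primitive_torsion_simply_transitive
    (F : Type*) [Field F] [NumberField F]
    (htr : ∀ v : NumberField.InfinitePlace F, v.IsReal)
    (𝔤 : Ideal (𝓞 F)) (h𝔤 : 𝔤 ≠ ⊥) :
    -- well-definedness: totally positive `β ≡ 1 mod 𝔤` acts trivially
    (∀ (𝔞 : FractionalIdeal (𝓞 F)⁰ F) (ξ : F → ℂ), 𝔞 ≠ 0 → IsPrimTorsChar 𝔤 𝔞 ξ →
      ∀ β : 𝓞 F, IsTotPos F (β : F) → β - 1 ∈ 𝔤 →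
        TorsRel (𝔞 * (Ideal.span {β} : FractionalIdeal (𝓞 F)⁰ F)) ξ 𝔞 ξ) ∧
    -- transitivity
    (∀ (𝔞 𝔞' : FractionalIdeal (𝓞 F)⁰ F) (ξ ξ' : F → ℂ), 𝔞 ≠ 0 → 𝔞' ≠ 0 →
      IsPrimTorsChar 𝔤 𝔞 ξ → IsPrimTorsChar 𝔤 𝔞' ξ' →
      ∃ 𝔟 : Ideal (𝓞 F), 𝔟 ≠ ⊥ ∧ IsCoprime 𝔟 𝔤 ∧
        TorsRel (𝔞 * (𝔟 : FractionalIdeal (𝓞 F)⁰ F)) ξ 𝔞' ξ') ∧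
    -- uniqueness: the acting class is unique in `Cl_F^+(𝔤)`
    (∀ (𝔞 𝔞' : FractionalIdeal (𝓞 F)⁰ F) (ξ ξ' : F → ℂ), 𝔞 ≠ 0 → 𝔞' ≠ 0 →
      IsPrimTorsChar 𝔤 𝔞 ξ → IsPrimTorsChar 𝔤 𝔞' ξ' →
      ∀ 𝔟 𝔟' : Ideal (𝓞 F), 𝔟 ≠ ⊥ → 𝔟' ≠ ⊥ → IsCoprime 𝔟 𝔤 → IsCoprime 𝔟' 𝔤 →
        TorsRel (𝔞 * (𝔟 : FractionalIdeal (𝓞 F)⁰ F)) ξ 𝔞' ξ' →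
        TorsRel (𝔞 * (𝔟' : FractionalIdeal (𝓞 F)⁰ F)) ξ 𝔞' ξ' →
        ∃ x : F, IsTotPos F x ∧ MulCongOne 𝔤 x ∧
          (𝔟' : FractionalIdeal (𝓞 F)⁰ F) =
            spanSingleton (𝓞 F)⁰ x * (𝔟 : FractionalIdeal (𝓞 F)⁰ F)) := by
  refine ⟨?_, ?_, ?_⟩
  · -- well-definedness
    intro 𝔞 ξ h𝔞 hξ β hβpos hβ𝔤
    refine ⟨(β : F), hβpos, ?_, ?_⟩
    · rw [coeIdeal_span_singleton, coe_algebraMap, mul_comm]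
    · intro α hα
      have hsplit : (β : F) * α = α + ((β - 1 : 𝓞 F) : F) * α := by push_cast; ring
      rw [hsplit]
      exact (hξ.1.2.2 α hα _ (mem_g_mul hβ𝔤 hα)).symm
  · -- transitivity
    intro 𝔞 𝔞' ξ ξ' h𝔞 h𝔞' hξ hξ'
    have h𝔞inv' : 𝔞'⁻¹ ≠ 0 := by
      intro h
      have h2 := mul_inv_cancel₀ h𝔞'
      rw [h, mul_zero] at h2
      exact zero_ne_one h2
    have hJ0 : 𝔞 * 𝔞'⁻¹ ≠ 0 := mul_ne_zero h𝔞 h𝔞inv'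
    obtain ⟨z, hz0, hzJ, 𝔠, h𝔠cop, hzspan⟩ := exists_gen 𝔤 h𝔤 (𝔞 * 𝔞'⁻¹) hJ0
    obtain ⟨s₀, hs₀𝔤, hs₀pos⟩ := exists_sign_fix 𝔤 h𝔤 z hz0
    have hx₀pos : IsTotPos F (z * (s₀ : F)) := hs₀pos
    have hx₀0 : z * (s₀ : F) ≠ 0 := totPos_ne_zero htr hx₀pos
    have hs₀0 : (s₀ : F) ≠ 0 := fun h => hx₀0 (by rw [h, mul_zero])
    have hs₀int : s₀ ≠ 0 := fun h => hs₀0 (by rw [h]; simp)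
    have h𝔟₀cop : IsCoprime (𝔠 * Ideal.span {s₀}) 𝔤 := h𝔠cop.mul_left (span_coprime hs₀𝔤)
    have hx₀span : spanSingleton (𝓞 F)⁰ (z * (s₀ : F)) =
        (𝔞 * 𝔞'⁻¹) * ((𝔠 * Ideal.span {s₀} : Ideal (𝓞 F)) : FractionalIdeal (𝓞 F)⁰ F) := by
      rw [← spanSingleton_mul_spanSingleton, hzspan, coeIdeal_mul,
        coeIdeal_span_singleton, coe_algebraMap, mul_assoc]
    have hax : 𝔞 * ((𝔠 * Ideal.span {s₀} : Ideal (𝓞 F)) : FractionalIdeal (𝓞 F)⁰ F) =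
        spanSingleton (𝓞 F)⁰ (z * (s₀ : F)) * 𝔞' := by
      rw [hx₀span,
        show 𝔞 * 𝔞'⁻¹ * ((𝔠 * Ideal.span {s₀} : Ideal (𝓞 F)) : FractionalIdeal (𝓞 F)⁰ F) * 𝔞'
          = 𝔞 * ((𝔠 * Ideal.span {s₀} : Ideal (𝓞 F)) : FractionalIdeal (𝓞 F)⁰ F) * (𝔞'⁻¹ * 𝔞')
          from by ring, inv_mul_cancel₀ h𝔞', mul_one]
    have hηprim : IsPrimTorsChar 𝔤 𝔞' (fun α => ξ (z * (s₀ : F) * α)) :=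
      pullback_prim hξ h𝔟₀cop hax
    obtain ⟨w, hw0, ⟨v, hwv⟩, hwchar⟩ := exists_multiplier h𝔤 h𝔞' hηprim hξ'
    have hwF : (w : F) ≠ 0 := fun h => hw0 (IsFractionRing.injective (𝓞 F) F (by simpa using h))
    obtain ⟨s₁, hs₁𝔤, hs₁pos⟩ := exists_sign_fix 𝔤 h𝔤 (z * (s₀ : F) * (w : F))
      (mul_ne_zero hx₀0 hwF)
    have hxpos : IsTotPos F (z * (s₀ : F) * ((w * s₁ : 𝓞 F) : F)) := by
      have heq : z * (s₀ : F) * ((w * s₁ : 𝓞 F) : F) = z * (s₀ : F) * (w : F) * (s₁ : F) := by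
        push_cast; ring
      rw [heq]; exact hs₁pos
    have hx0 : z * (s₀ : F) * ((w * s₁ : 𝓞 F) : F) ≠ 0 := totPos_ne_zero htr hxpos
    have hws₁ : (w * s₁ : 𝓞 F) ≠ 0 := by
      intro h; apply hx0; rw [h]; simp
    have h𝔠0 : 𝔠 ≠ ⊥ := by
      intro h
      rw [h, coeIdeal_bot, mul_zero] at hzspan
      exact hz0 (spanSingleton_eq_zero_iff.mp hzspan)
    have h𝔟₀0 : 𝔠 * Ideal.span {s₀} ≠ ⊥ := by
      intro h
      rcases Ideal.mul_eq_bot.mp h with h | h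
      · exact h𝔠0 h
      · exact hs₀int (Ideal.span_singleton_eq_bot.mp h)
    refine ⟨𝔠 * Ideal.span {s₀} * Ideal.span {w * s₁}, ?_, ?_,
      ⟨z * (s₀ : F) * ((w * s₁ : 𝓞 F) : F), hxpos, ?_, ?_⟩⟩
    · intro h
      rcases Ideal.mul_eq_bot.mp h with h | h
      · exact h𝔟₀0 h
      · exact hws₁ (Ideal.span_singleton_eq_bot.mp h)
    · refine h𝔟₀cop.mul_left (cong_coprime ⟨v, ?_⟩)
      have heq : w * s₁ * v - 1 = (w * v - 1) * s₁ + (s₁ - 1) := by ring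
      rw [heq]
      exact Submodule.add_mem _ (Ideal.mul_mem_right _ _ hwv) hs₁𝔤
    · rw [coeIdeal_mul, coeIdeal_span_singleton, coe_algebraMap,
        show 𝔞 * (((𝔠 * Ideal.span {s₀} : Ideal (𝓞 F)) : FractionalIdeal (𝓞 F)⁰ F) *
          spanSingleton (𝓞 F)⁰ ((w * s₁ : 𝓞 F) : F)) =
          (𝔞 * ((𝔠 * Ideal.span {s₀} : Ideal (𝓞 F)) : FractionalIdeal (𝓞 F)⁰ F)) *
          spanSingleton (𝓞 F)⁰ ((w * s₁ : 𝓞 F) : F) from by rw [mul_assoc], hax,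
        show spanSingleton (𝓞 F)⁰ (z * (s₀ : F)) * 𝔞' * spanSingleton (𝓞 F)⁰
          ((w * s₁ : 𝓞 F) : F) = (spanSingleton (𝓞 F)⁰ (z * (s₀ : F)) * spanSingleton (𝓞 F)⁰
          ((w * s₁ : 𝓞 F) : F)) * 𝔞' from by ring, spanSingleton_mul_spanSingleton]
    · intro α hα
      obtain ⟨hm1, hm2⟩ := pullback_mems (𝔤 := 𝔤) hax
      have hwα : (w : F) * α ∈ 𝔞' := smul_mem' w hα
      have hsplit : z * (s₀ : F) * ((w * s₁ : 𝓞 F) : F) * α =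
          z * (s₀ : F) * ((w : F) * α) +
          z * (s₀ : F) * (((w * (s₁ - 1) : 𝓞 F) : F) * α) := by push_cast; ring
      have hδ : z * (s₀ : F) * (((w * (s₁ - 1) : 𝓞 F) : F) * α) ∈
          (𝔤 : FractionalIdeal (𝓞 F)⁰ F) * 𝔞 :=
        hm2 _ (mem_g_mul (Ideal.mul_mem_left _ w hs₁𝔤) hα)
      rw [hsplit, hξ.1.2.2 _ (hm1 _ hwα) _ hδ]
      simpa using hwchar α hα
  · -- uniqueness
    intro 𝔞 𝔞' ξ ξ' h𝔞 h𝔞' hξ hξ' 𝔟 𝔟' h𝔟 h𝔟' hcop hcop' hT hT'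
    obtain ⟨x, hxpos, hxeq, hxchar⟩ := hT
    obtain ⟨x', hx'pos, hx'eq, hx'char⟩ := hT'
    have hx0 : x ≠ 0 := totPos_ne_zero htr hxpos
    have hx'0 : x' ≠ 0 := totPos_ne_zero htr hx'pos
    have hypos : IsTotPos F (x' / x) := totPos_div hx'pos hxpos
    have hspan𝔟' : (𝔟' : FractionalIdeal (𝓞 F)⁰ F) =
        spanSingleton (𝓞 F)⁰ (x' / x) * (𝔟 : FractionalIdeal (𝓞 F)⁰ F) := by
      apply mul_left_cancel₀ h𝔞
      rw [hx'eq,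
        show 𝔞 * (spanSingleton (𝓞 F)⁰ (x' / x) * (𝔟 : FractionalIdeal (𝓞 F)⁰ F)) =
          spanSingleton (𝓞 F)⁰ (x' / x) * (𝔞 * (𝔟 : FractionalIdeal (𝓞 F)⁰ F)) from by ring,
        hxeq, ← mul_assoc, spanSingleton_mul_spanSingleton, div_mul_cancel₀ _ hx0]
    refine ⟨x' / x, hypos, ?_, hspan𝔟'⟩
    -- MulCongOne
    have h𝔞𝔟le : 𝔞 * (𝔟 : FractionalIdeal (𝓞 F)⁰ F) ≤ 𝔞 := mul_coeIdeal_le 𝔞 𝔟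
    have hxmem : ∀ α ∈ 𝔞', x * α ∈ 𝔞 := by
      intro α hα
      apply h𝔞𝔟le
      rw [hxeq]
      exact FractionalIdeal.mul_mem_mul (mem_spanSingleton_self _ _) hα
    have hx'mem : ∀ α ∈ 𝔞', x' * α ∈ 𝔞 := by
      intro α hα
      apply mul_coeIdeal_le 𝔞 𝔟'
      rw [hx'eq]
      exact FractionalIdeal.mul_mem_mul (mem_spanSingleton_self _ _) hα
    by_cases htop : 𝔤 = ⊤
    · obtain ⟨a, b, hb, hab⟩ : ∃ a b : 𝓞 F, b ∈ (𝓞 F)⁰ ∧ (x' / x) * (b : F) = (a : F) := by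
        obtain ⟨⟨a, b⟩, h⟩ := IsLocalization.surj (𝓞 F)⁰ (x' / x)
        exact ⟨a, b, b.2, h⟩
      have hbF : (b : F) ≠ 0 := by
        simpa [coe_algebraMap] using
          (map_ne_zero_of_mem_nonZeroDivisors (algebraMap (𝓞 F) F)
            (IsFractionRing.injective (𝓞 F) F) hb)
      exact ⟨a, b, hbF, by rw [eq_div_iff hbF]; exact hab, htop ▸ Submodule.mem_top,
        htop ▸ Submodule.mem_top⟩
    · -- ξ trivial on (x'-x)𝔞'
      have hdiff : ∀ α ∈ 𝔞', ξ ((x' - x) * α) = 1 := by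
        intro α hα
        have hsub : (x' - x) * α = x' * α - x * α := by ring
        have hsubmem : (x' - x) * α ∈ 𝔞 := by
          rw [hsub]
          exact Submodule.sub_mem (𝔞 : Submodule (𝓞 F) F) (hx'mem α hα) (hxmem α hα)
        have e1 : ξ ((x' - x) * α + x * α) = ξ ((x' - x) * α) * ξ (x * α) :=
          hξ.1.1 _ hsubmem _ (hxmem α hα)
        have e2 : (x' - x) * α + x * α = x' * α := by ring
        rw [e2] at e1
        have e3 : ξ (x' * α) = ξ (x * α) := by rw [← hxchar α hα, ← hx'char α hα]
        rw [e3] at e1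
        exact mul_right_cancel₀ (tors_ne_zero hξ.1 (hxmem α hα))
          (by rw [← e1, one_mul])
      by_cases hxx : x' - x = 0
      · have hy1 : x' / x = 1 := by
          rw [sub_eq_zero.mp hxx, div_self hx0]
        exact ⟨1, 1, by simp, by rw [hy1]; simp, by simpa using 𝔤.zero_mem,
          by simpa using 𝔤.zero_mem⟩
      · have hsub' : ∀ α ∈ 𝔞', (x' - x) * α ∈ 𝔞 := by
          intro α hα
          rw [show (x' - x) * α = x' * α - x * α from by ring]
          exact Submodule.sub_mem (𝔞 : Submodule (𝓞 F) F) (hx'mem α hα) (hxmem α hα)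
        have hle1 : spanSingleton (𝓞 F)⁰ (x' - x) * 𝔞' * 𝔞⁻¹ ≤ 1 := by
          have hle0 : spanSingleton (𝓞 F)⁰ (x' - x) * 𝔞' ≤ 𝔞 := by
            rw [FractionalIdeal.mul_le]
            intro i hi j hj
            obtain ⟨r, hr⟩ := (mem_spanSingleton _).mp hi
            rw [← hr, Algebra.smul_def, coe_algebraMap,
              show (r : F) * (x' - x) * j = (r : F) * ((x' - x) * j) from by ring]
            exact smul_mem' r (hsub' j hj)
          calc spanSingleton (𝓞 F)⁰ (x' - x) * 𝔞' * 𝔞⁻¹ ≤ 𝔞 * 𝔞⁻¹ :=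
                mul_le_mul_left hle0 𝔞⁻¹
          _ = 1 := mul_inv_cancel₀ h𝔞
        obtain ⟨𝔥, h𝔥⟩ := le_one_iff_exists_coeIdeal.mp hle1
        have h𝔥eq : (𝔥 : FractionalIdeal (𝓞 F)⁰ F) * 𝔞 =
            spanSingleton (𝓞 F)⁰ (x' - x) * 𝔞' := by
          rw [h𝔥, mul_assoc, inv_mul_cancel₀ h𝔞, mul_one]
        have htriv : ∀ γ ∈ (𝔥 : FractionalIdeal (𝓞 F)⁰ F) * 𝔞, ξ γ = 1 := by
          intro γ hγ
          rw [h𝔥eq] at hγ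
          obtain ⟨α, hα, hγeq⟩ := mem_singleton_mul.mp hγ
          rw [hγeq]
          exact hdiff α hα
        have h𝔥𝔤 : 𝔥 ≤ 𝔤 := ker_le hξ 𝔥 htriv
        -- construct a, b
        have hsup : (1 : 𝓞 F) ∈ 𝔟 ⊔ 𝔤 := by
          rw [hcop.sup_eq]; exact Submodule.mem_top
        obtain ⟨u, hu, g, hg, hug⟩ := Submodule.mem_sup.mp hsup
        have hu0 : u ≠ 0 := by
          intro h
          apply htop
          rw [Ideal.eq_top_iff_one]
          rw [h, zero_add] at hug
          rwa [← hug]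
        have huF : (u : F) ≠ 0 :=
          fun h => hu0 (IsFractionRing.injective (𝓞 F) F (by simpa using h))
        have humem : (u : F) ∈ (𝔟 : FractionalIdeal (𝓞 F)⁰ F) :=
          (mem_coeIdeal _).mpr ⟨u, hu, rfl⟩
        have hyumem : (x' / x) * (u : F) ∈ (𝔟' : FractionalIdeal (𝓞 F)⁰ F) := by
          rw [hspan𝔟']
          exact FractionalIdeal.mul_mem_mul (mem_spanSingleton_self _ _) humem
        obtain ⟨a, ha𝔟', haeq⟩ := (mem_coeIdeal _).mp hyumem
        -- (y-1)*u ∈ 𝔤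
        have h𝔟eq : (𝔟 : FractionalIdeal (𝓞 F)⁰ F) =
            spanSingleton (𝓞 F)⁰ x * 𝔞' * 𝔞⁻¹ := by
          apply mul_left_cancel₀ h𝔞
          rw [hxeq, show 𝔞 * (spanSingleton (𝓞 F)⁰ x * 𝔞' * 𝔞⁻¹) =
            spanSingleton (𝓞 F)⁰ x * 𝔞' * (𝔞 * 𝔞⁻¹) from by ring,
            mul_inv_cancel₀ h𝔞, mul_one]
        have hkeyle : spanSingleton (𝓞 F)⁰ (x' / x - 1) * (𝔟 : FractionalIdeal (𝓞 F)⁰ F) ≤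
            (𝔤 : FractionalIdeal (𝓞 F)⁰ F) := by
          have he1 : spanSingleton (𝓞 F)⁰ (x' / x - 1) * (𝔟 : FractionalIdeal (𝓞 F)⁰ F) =
              (𝔥 : FractionalIdeal (𝓞 F)⁰ F) := by
            rw [h𝔟eq, h𝔥, ← mul_assoc, ← mul_assoc, spanSingleton_mul_spanSingleton,
              show (x' / x - 1) * x = x' - x from by field_simp]
          rw [he1]
          exact (coeIdeal_le_coeIdeal F).mpr h𝔥𝔤
        have haeq' : (a : F) = (x' / x) * (u : F) := haeq
        have haumem : (a : F) - (u : F) ∈ (𝔤 : FractionalIdeal (𝓞 F)⁰ F) := by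
          have he2 : (a : F) - (u : F) = (x' / x - 1) * (u : F) := by rw [haeq']; ring
          rw [he2]
          exact hkeyle (FractionalIdeal.mul_mem_mul (mem_spanSingleton_self _ _) humem)
        have hau : a - u ∈ 𝔤 := coe_mem_coeIdeal (by
          rw [show ((a - u : 𝓞 F) : F) = (a : F) - (u : F) from by push_cast; ring]
          exact haumem)
        have hb1 : u - 1 ∈ 𝔤 := by
          have he3 : u - 1 = -g := by rw [← hug]; ring
          rw [he3]; exact Submodule.neg_mem _ hg
        have ha1 : a - 1 ∈ 𝔤 := by
          have he4 : a - 1 = (a - u) + (u - 1) := by ring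
          rw [he4]; exact Submodule.add_mem _ hau hb1
        refine ⟨a, u, huF, ?_, ha1, hb1⟩
        rw [eq_div_iff huF]
        exact haeq'.symm
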